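/- Fix integers l ≥ 1 and r ≥ 1. For n ≥ 1 and k ≥ 0, let E(n,k) denote the number of l-tuples (f_1,…,f_l) of subexceedant functions on [n] such that {1,…,r} ⊆ bl(f_1), |bl(f_1)| = k+1, and bl(f_1) = ⋯ = bl(f_l), and set E(n,−1) = 0. Then for all n ≥ r+1 and all k ≥ 0, E(n,k) = (n−k)^l·E(n−1,k−1) + (k+1)^l·E(n−1,k). -/

import Mathlib

/-- The block-leader set of a function `f` on `Fin n` (0-indexed version of `[n]`):
the set of indices `i` such that `f i` is not attained at any earlier index. -/
def blFun {n : ℕ} (f : Fin n → Fin n) : Finset (Fin n) :=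
  Finset.univ.filter (fun i => ∀ j, j < i → f j ≠ f i)

/-- `lrEulerCount l r n k` is the number of `l`-tuples `(f₁,…,f_l)` of subexceedant functions
on `[n]` (0-indexed: `f i ≤ i`) such that `{1,…,r}` (0-indexed: indices `< r`) is contained in
`bl(f₁)`, `|bl(f₁)| = k + 1`, and `bl(f₁) = ⋯ = bl(f_l)`; it is `0` for `k < 0`. -/
noncomputable def lrEulerCount (l r n : ℕ) (k : ℤ) : ℕ :=
  if k < 0 then 0
  else Nat.card {F : Fin l → Fin n → Fin n //
    (∀ m i, F m i ≤ i) ∧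
    (∀ m, ∀ i : Fin n, (i : ℕ) < r → i ∈ blFun (F m)) ∧
    (∀ m, (blFun (F m)).card = k.toNat + 1) ∧
    (∀ m m', blFun (F m) = blFun (F m'))}

namespace LrEulerProof


variable {n : ℕ}

lemma mem_blFun {f : Fin n → Fin n} {i : Fin n} :
    i ∈ blFun f ↔ ∀ j, j < i → f j ≠ f i := by simp [blFun]

def res (f : Fin (n + 1) → Fin (n + 1)) (i : Fin n) : Fin n :=
  ⟨min (f i.castSucc : ℕ) i, lt_of_le_of_lt (min_le_right _ _) i.isLt⟩

lemma res_le (f : Fin (n + 1) → Fin (n + 1)) (i : Fin n) : res f i ≤ i :=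
  Fin.mk_le_of_le_val (min_le_right _ _)

lemma res_val {f : Fin (n + 1) → Fin (n + 1)} (hf : ∀ i, f i ≤ i) (i : Fin n) :
    (res f i : ℕ) = (f i.castSucc : ℕ) := by
  have := hf i.castSucc
  exact min_eq_left (by simpa [Fin.le_def] using this)

lemma res_castSucc {f : Fin (n + 1) → Fin (n + 1)} (hf : ∀ i, f i ≤ i) (i : Fin n) :
    (res f i).castSucc = f i.castSucc :=
  Fin.ext (res_val hf i)

def ext (g : Fin n → Fin n) (v : Fin (n + 1)) : Fin (n + 1) → Fin (n + 1) :=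
  Fin.snoc (fun i => (g i).castSucc) v

@[simp] lemma ext_castSucc (g : Fin n → Fin n) (v : Fin (n + 1)) (i : Fin n) :
    ext g v i.castSucc = (g i).castSucc := Fin.snoc_castSucc ..

@[simp] lemma ext_last (g : Fin n → Fin n) (v : Fin (n + 1)) :
    ext g v (Fin.last n) = v := Fin.snoc_last ..

lemma ext_subexc {g : Fin n → Fin n} (hg : ∀ i, g i ≤ i) (v : Fin (n + 1)) :
    ∀ i, ext g v i ≤ i := by
  intro i
  induction i using Fin.lastCases with
  | last => simpa using Fin.le_last v
  | cast i => simpa [Fin.castSucc_le_castSucc_iff] using hg i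

lemma res_ext {g : Fin n → Fin n} (hg : ∀ i, g i ≤ i) (v : Fin (n + 1)) :
    res (ext g v) = g := by
  funext i
  apply Fin.ext
  rw [res_val (ext_subexc hg v)]
  simp

lemma ext_res {f : Fin (n + 1) → Fin (n + 1)} (hf : ∀ i, f i ≤ i) :
    ext (res f) (f (Fin.last n)) = f := by
  funext i
  induction i using Fin.lastCases with
  | last => simp
  | cast i =>
    apply Fin.ext
    simpa using res_val hf i

lemma castSucc_mem_blFun {f : Fin (n + 1) → Fin (n + 1)} (hf : ∀ i, f i ≤ i) (i : Fin n) :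
    i.castSucc ∈ blFun f ↔ i ∈ blFun (res f) := by
  simp only [mem_blFun]
  constructor
  · intro h j hj heq
    exact h j.castSucc (by simpa [Fin.castSucc_lt_castSucc_iff] using hj)
      (Fin.ext (by rw [← res_val hf j, ← res_val hf i, heq]))
  · intro h j hj heq
    have hjn : (j : ℕ) < n := lt_of_lt_of_le hj (by simp [Fin.le_def])
    refine h ⟨j, hjn⟩ (by simpa [Fin.lt_def] using hj) (Fin.ext ?_)
    rw [res_val hf, res_val hf]
    have : (⟨j, hjn⟩ : Fin n).castSucc = j := Fin.ext rfl
    rw [this, heq]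

lemma last_mem_blFun {f : Fin (n + 1) → Fin (n + 1)} :
    Fin.last n ∈ blFun f ↔ ∀ i : Fin n, f i.castSucc ≠ f (Fin.last n) := by
  simp only [mem_blFun]
  constructor
  · intro h i
    exact h i.castSucc (Fin.castSucc_lt_last i)
  · intro h j hj
    have hjn : (j : ℕ) < n := hj
    have := h ⟨j, hjn⟩
    rwa [show (⟨j, hjn⟩ : Fin n).castSucc = j from Fin.ext rfl] at this

lemma card_blFun_res {f : Fin (n + 1) → Fin (n + 1)} (hf : ∀ i, f i ≤ i) :
    (blFun f).card
      = (blFun (res f)).card + (if Fin.last n ∈ blFun f then 1 else 0) := by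
  classical
  have h1 : (blFun f).card = ∑ i : Fin (n + 1), if i ∈ blFun f then 1 else 0 := by
    rw [← Finset.card_filter]
    congr 1
    exact (Finset.filter_univ_mem _).symm
  have h2 : (blFun (res f)).card = ∑ i : Fin n, if i ∈ blFun (res f) then 1 else 0 := by
    rw [← Finset.card_filter]
    congr 1
    exact (Finset.filter_univ_mem _).symm
  rw [h1, Fin.sum_univ_castSucc, h2]
  congr 1
  exact Finset.sum_congr rfl fun i _ => if_congr (castSucc_mem_blFun hf i) rfl rfl



lemma card_image_blFun (g : Fin n → Fin n) :
    (Finset.image g Finset.univ).card = (blFun g).card := by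
  classical
  symm
  refine Finset.card_bij' (fun i _ => g i)
    (fun v hv => (Finset.univ.filter (fun i => g i = v)).min'
      (by obtain ⟨i, _, hi⟩ := Finset.mem_image.mp hv
          exact ⟨i, Finset.mem_filter.mpr ⟨Finset.mem_univ i, hi⟩⟩))
    (fun i hi => Finset.mem_image_of_mem g (Finset.mem_univ i)) ?_ ?_ ?_
  · intro v hv
    set s := Finset.univ.filter (fun i => g i = v) with hs
    have hne : s.Nonempty := by
      obtain ⟨i, _, hi⟩ := Finset.mem_image.mp hv
      exact ⟨i, Finset.mem_filter.mpr ⟨Finset.mem_univ i, hi⟩⟩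
    have hmem := Finset.min'_mem s hne
    rw [Finset.mem_filter] at hmem
    rw [mem_blFun]
    intro j hj heq
    have : j ∈ s := Finset.mem_filter.mpr ⟨Finset.mem_univ j, by rw [heq, hmem.2]⟩
    exact absurd (Finset.min'_le s j this) (not_le.mpr hj)
  · intro i hi
    set s := Finset.univ.filter (fun j => g j = g i) with hs
    have hself : i ∈ s := Finset.mem_filter.mpr ⟨Finset.mem_univ i, rfl⟩
    have hle := Finset.min'_le s i hself
    have hmem := Finset.min'_mem s ⟨i, hself⟩
    rw [Finset.mem_filter] at hmem
    rcases lt_or_eq_of_le hle with h | h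
    · exact absurd hmem.2 ((mem_blFun.mp hi) _ h)
    · exact h
  · intro v hv
    have hmem := Finset.min'_mem (Finset.univ.filter (fun i => g i = v))
      (by obtain ⟨i, _, hi⟩ := Finset.mem_image.mp hv
          exact ⟨i, Finset.mem_filter.mpr ⟨Finset.mem_univ i, hi⟩⟩)
    rw [Finset.mem_filter] at hmem
    exact hmem.2

lemma card_compl_image (g : Fin n → Fin n) :
    Nat.card {v : Fin (n + 1) // ∀ i, (g i).castSucc ≠ v} = n + 1 - (blFun g).card := by
  classical
  rw [Nat.card_eq_fintype_card, Fintype.card_subtype]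
  have h : Finset.univ.filter (fun v => ∀ i, (g i).castSucc ≠ v)
      = Finset.univ \ Finset.image (fun i => (g i).castSucc) Finset.univ := by
    ext v
    simp [Finset.mem_image, not_exists]
  rw [h, Finset.card_sdiff_of_subset (Finset.subset_univ _)]
  have h2 : (Finset.image (fun i => (g i).castSucc) Finset.univ).card = (blFun g).card := by
    have : Finset.image (fun i => (g i).castSucc) Finset.univ
        = Finset.image Fin.castSucc (Finset.image g Finset.univ) := by
      rw [Finset.image_image]; rfl
    rw [this, Finset.card_image_of_injective _ (Fin.castSucc_injective n),
      card_image_blFun]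
  rw [h2]
  simp

lemma card_mem_image (g : Fin n → Fin n) :
    Nat.card {v : Fin (n + 1) // ∃ i, (g i).castSucc = v} = (blFun g).card := by
  classical
  rw [Nat.card_eq_fintype_card, Fintype.card_subtype]
  have h : Finset.univ.filter (fun v => ∃ i, (g i).castSucc = v)
      = Finset.image (fun i => (g i).castSucc) Finset.univ := by
    ext v
    simp [Finset.mem_image]
  rw [h]
  have : Finset.image (fun i => (g i).castSucc) Finset.univ
      = Finset.image Fin.castSucc (Finset.image g Finset.univ) := by
    rw [Finset.image_image]; rfl
  rw [this, Finset.card_image_of_injective _ (Fin.castSucc_injective n),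
    card_image_blFun]

lemma natCard_sigma {ι : Type*} [Fintype ι] (f : ι → Type*) [∀ i, Finite (f i)] :
    Nat.card (Σ i, f i) = ∑ i, Nat.card (f i) := by
  letI : ∀ i, Fintype (f i) := fun i => Fintype.ofFinite _
  simp [Nat.card_eq_fintype_card]


lemma last_mem_ext_iff {g : Fin n → Fin n} {v : Fin (n + 1)} :
    Fin.last n ∈ blFun (ext g v) ↔ ∀ i, (g i).castSucc ≠ v := by
  rw [last_mem_blFun]
  simp only [ext_castSucc, ext_last]

lemma castSucc_mem_ext_iff {g : Fin n → Fin n} (hg : ∀ i, g i ≤ i) {v : Fin (n + 1)}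
    (j : Fin n) : j.castSucc ∈ blFun (ext g v) ↔ j ∈ blFun g := by
  rw [castSucc_mem_blFun (ext_subexc hg v), res_ext hg]

lemma card_blFun_ext {g : Fin n → Fin n} (hg : ∀ i, g i ≤ i) (v : Fin (n + 1)) :
    (blFun (ext g v)).card
      = (blFun g).card + (if Fin.last n ∈ blFun (ext g v) then 1 else 0) := by
  rw [card_blFun_res (ext_subexc hg v), res_ext hg]

lemma card_res_of_last_mem {f : Fin (n + 1) → Fin (n + 1)} (hf : ∀ i, f i ≤ i)
    (h5 : Fin.last n ∈ blFun f) {c : ℕ} (h3 : (blFun f).card = c + 1) :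
    (blFun (res f)).card = c := by
  have := card_blFun_res hf
  rw [if_pos h5] at this
  omega

lemma card_res_of_last_not_mem {f : Fin (n + 1) → Fin (n + 1)} (hf : ∀ i, f i ≤ i)
    (h5 : Fin.last n ∉ blFun f) {c : ℕ} (h3 : (blFun f).card = c) :
    (blFun (res f)).card = c := by
  have := card_blFun_res hf
  rw [if_neg h5] at this
  omega

def GoodT (l r n k : ℕ) : Type :=
  {F : Fin l → Fin n → Fin n //
    (∀ m i, F m i ≤ i) ∧
    (∀ m, ∀ i : Fin n, (i : ℕ) < r → i ∈ blFun (F m)) ∧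
    (∀ m, (blFun (F m)).card = k + 1) ∧
    (∀ m m', blFun (F m) = blFun (F m'))}

instance (l r n k : ℕ) : Finite (GoodT l r n k) := Subtype.finite

lemma res_good {l r : ℕ} (F : Fin l → Fin (n + 1) → Fin (n + 1))
    (h1 : ∀ m i, F m i ≤ i)
    (h2 : ∀ m, ∀ i : Fin (n + 1), (i : ℕ) < r → i ∈ blFun (F m))
    (h4 : ∀ m m', blFun (F m) = blFun (F m')) :
    (∀ m i, res (F m) i ≤ i) ∧
    (∀ m, ∀ i : Fin n, (i : ℕ) < r → i ∈ blFun (res (F m))) ∧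
    (∀ m m', blFun (res (F m)) = blFun (res (F m'))) := by
  refine ⟨fun m i => res_le _ _, fun m i hi => ?_, fun m m' => ?_⟩
  · rw [← castSucc_mem_blFun (h1 m)]
    exact h2 m i.castSucc (by simpa using hi)
  · ext j
    rw [← castSucc_mem_blFun (h1 m), ← castSucc_mem_blFun (h1 m'), h4 m m']

lemma ext_good {l r : ℕ} (hrn : r ≤ n) (G : Fin l → Fin n → Fin n)
    (v : Fin l → Fin (n + 1))
    (h1 : ∀ m i, G m i ≤ i)
    (h2 : ∀ m, ∀ i : Fin n, (i : ℕ) < r → i ∈ blFun (G m))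
    (h4 : ∀ m m', blFun (G m) = blFun (G m'))
    (hlast : ∀ m m',
      (Fin.last n ∈ blFun (ext (G m) (v m))) ↔ (Fin.last n ∈ blFun (ext (G m') (v m')))) :
    (∀ m i, ext (G m) (v m) i ≤ i) ∧
    (∀ m, ∀ i : Fin (n + 1), (i : ℕ) < r → i ∈ blFun (ext (G m) (v m))) ∧
    (∀ m m', blFun (ext (G m) (v m)) = blFun (ext (G m') (v m'))) := by
  refine ⟨fun m => ext_subexc (h1 m) (v m), fun m i hi => ?_, fun m m' => ?_⟩
  · have hin : (i : ℕ) < n := lt_of_lt_of_le hi hrn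
    have hi' : i = (⟨i, hin⟩ : Fin n).castSucc := Fin.ext rfl
    rw [hi', castSucc_mem_ext_iff (h1 m)]
    exact h2 m ⟨i, hin⟩ hi
  · ext j
    induction j using Fin.lastCases with
    | last => exact hlast m m'
    | cast j =>
      rw [castSucc_mem_ext_iff (h1 m), castSucc_mem_ext_iff (h1 m'), h4 m m']

lemma cardA_succ (l r n k : ℕ) (hrn : r ≤ n) :
    Nat.card {F : GoodT l r (n + 1) (k + 1) // ∀ m, Fin.last n ∈ blFun (F.1 m)} =
      (n - k) ^ l * Nat.card (GoodT l r n k) := by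
  classical
  letI : Fintype (GoodT l r n k) := Fintype.ofFinite _
  set A := {F : GoodT l r (n + 1) (k + 1) // ∀ m, Fin.last n ∈ blFun (F.1 m)} with hA
  let π : A → GoodT l r n k := fun F =>
    ⟨fun m => res (F.1.1 m), by
      obtain ⟨⟨G, h1, h2, h3, h4⟩, h5⟩ := F
      exact ⟨(res_good G h1 h2 h4).1, (res_good G h1 h2 h4).2.1,
        fun m => card_res_of_last_mem (h1 m) (h5 m) (h3 m),
        (res_good G h1 h2 h4).2.2⟩⟩
  have hcard : Nat.card A = ∑ G : GoodT l r n k, Nat.card {F : A // π F = G} := by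
    rw [← natCard_sigma]
    exact (Nat.card_congr (Equiv.sigmaFiberEquiv π)).symm
  have hfib : ∀ G : GoodT l r n k, Nat.card {F : A // π F = G} = (n - k) ^ l := by
    intro G
    obtain ⟨g1, g2, g3, g4⟩ := G.2
    have e : {F : A // π F = G} ≃ ∀ m, {v : Fin (n + 1) // ∀ i, (G.1 m i).castSucc ≠ v} := {
      toFun := fun F m => ⟨F.1.1.1 m (Fin.last n), by
        have hπ : (fun m => res (F.1.1.1 m)) = G.1 := congrArg Subtype.val F.2
        intro i
        have hGm : G.1 m = res (F.1.1.1 m) := (congrFun hπ m).symm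
        rw [hGm, res_castSucc (F.1.1.2.1 m)]
        exact last_mem_blFun.mp (F.1.2 m) i⟩
      invFun := fun vs => by
        have hlastA : ∀ m, Fin.last n ∈ blFun (ext (G.1 m) (vs m).1) :=
          fun m => last_mem_ext_iff.mpr (vs m).2
        have hg := ext_good hrn G.1 (fun m => (vs m).1) g1 g2 g4
          (fun m m' => iff_of_true (hlastA m) (hlastA m'))
        exact ⟨⟨⟨fun m => ext (G.1 m) (vs m).1, hg.1, hg.2.1,
          fun m => by rw [card_blFun_ext (g1 m), if_pos (hlastA m), g3 m], hg.2.2⟩,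
          hlastA⟩,
          Subtype.ext (funext fun m => res_ext (g1 m) (vs m).1)⟩
      left_inv := fun F => by
        apply Subtype.ext; apply Subtype.ext; apply Subtype.ext
        funext m
        show ext (G.1 m) (F.1.1.1 m (Fin.last n)) = F.1.1.1 m
        have hπ : (fun m => res (F.1.1.1 m)) = G.1 := congrArg Subtype.val F.2
        have hGm : G.1 m = res (F.1.1.1 m) := (congrFun hπ m).symm
        rw [hGm]
        exact ext_res (F.1.1.2.1 m)
      right_inv := fun vs => by
        funext m
        apply Subtype.ext
        show ext (G.1 m) (vs m).1 (Fin.last n) = (vs m).1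
        exact ext_last _ _ }
    rw [Nat.card_congr e, Nat.card_pi]
    have hv : ∀ m, Nat.card {v : Fin (n + 1) // ∀ i, (G.1 m i).castSucc ≠ v} = n - k :=
      fun m => by rw [card_compl_image, g3 m]; omega
    rw [Finset.prod_congr rfl (fun m _ => hv m), Finset.prod_const]
    simp
  rw [hcard, Finset.sum_congr rfl (fun G _ => hfib G), Finset.sum_const, Finset.card_univ]
  simp [Nat.card_eq_fintype_card, mul_comm]

lemma cardB (l r n k : ℕ) (hl : 1 ≤ l) (hrn : r ≤ n) :
    Nat.card {F : GoodT l r (n + 1) k // ¬ ∀ m, Fin.last n ∈ blFun (F.1 m)} =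
      (k + 1) ^ l * Nat.card (GoodT l r n k) := by
  classical
  letI : Fintype (GoodT l r n k) := Fintype.ofFinite _
  set B := {F : GoodT l r (n + 1) k // ¬ ∀ m, Fin.last n ∈ blFun (F.1 m)} with hB
  have notmem : ∀ F : B, ∀ m, Fin.last n ∉ blFun (F.1.1 m) := by
    rintro ⟨⟨F, h1, h2, h3, h4⟩, h5⟩ m
    obtain ⟨m0, hm0⟩ := not_forall.mp h5
    intro hc
    exact hm0 (by rwa [h4 m0 m])
  let π : B → GoodT l r n k := fun F =>
    ⟨fun m => res (F.1.1 m), by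
      have h6 := notmem F
      obtain ⟨⟨G, h1, h2, h3, h4⟩, h5⟩ := F
      exact ⟨(res_good G h1 h2 h4).1, (res_good G h1 h2 h4).2.1,
        fun m => card_res_of_last_not_mem (h1 m) (h6 m) (h3 m),
        (res_good G h1 h2 h4).2.2⟩⟩
  have hcard : Nat.card B = ∑ G : GoodT l r n k, Nat.card {F : B // π F = G} := by
    rw [← natCard_sigma]
    exact (Nat.card_congr (Equiv.sigmaFiberEquiv π)).symm
  have hfib : ∀ G : GoodT l r n k, Nat.card {F : B // π F = G} = (k + 1) ^ l := by
    intro G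
    obtain ⟨g1, g2, g3, g4⟩ := G.2
    have e : {F : B // π F = G} ≃ ∀ m, {v : Fin (n + 1) // ∃ i, (G.1 m i).castSucc = v} := {
      toFun := fun F m => ⟨F.1.1.1 m (Fin.last n), by
        have hπ : (fun m => res (F.1.1.1 m)) = G.1 := congrArg Subtype.val F.2
        have hGm : G.1 m = res (F.1.1.1 m) := (congrFun hπ m).symm
        have hnm := notmem F.1 m
        rw [last_mem_blFun] at hnm
        push_neg at hnm
        obtain ⟨i, hi⟩ := hnm
        refine ⟨i, ?_⟩
        rw [hGm, res_castSucc (F.1.1.2.1 m)]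
        exact hi⟩
      invFun := fun vs => by
        have hlastB : ∀ m, Fin.last n ∉ blFun (ext (G.1 m) (vs m).1) := by
          intro m hc
          obtain ⟨i, hi⟩ := (vs m).2
          exact last_mem_ext_iff.mp hc i hi
        have hg := ext_good hrn G.1 (fun m => (vs m).1) g1 g2 g4
          (fun m m' => iff_of_false (hlastB m) (hlastB m'))
        exact ⟨⟨⟨fun m => ext (G.1 m) (vs m).1, hg.1, hg.2.1,
          fun m => by rw [card_blFun_ext (g1 m), if_neg (hlastB m), g3 m], hg.2.2⟩,
          fun hall => hlastB ⟨0, hl⟩ (hall ⟨0, hl⟩)⟩,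
          Subtype.ext (funext fun m => res_ext (g1 m) (vs m).1)⟩
      left_inv := fun F => by
        apply Subtype.ext; apply Subtype.ext; apply Subtype.ext
        funext m
        show ext (G.1 m) (F.1.1.1 m (Fin.last n)) = F.1.1.1 m
        have hπ : (fun m => res (F.1.1.1 m)) = G.1 := congrArg Subtype.val F.2
        have hGm : G.1 m = res (F.1.1.1 m) := (congrFun hπ m).symm
        rw [hGm]
        exact ext_res (F.1.1.2.1 m)
      right_inv := fun vs => by
        funext m
        apply Subtype.ext
        show ext (G.1 m) (vs m).1 (Fin.last n) = (vs m).1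
        exact ext_last _ _ }
    rw [Nat.card_congr e, Nat.card_pi]
    have hv : ∀ m, Nat.card {v : Fin (n + 1) // ∃ i, (G.1 m i).castSucc = v} = k + 1 :=
      fun m => by rw [card_mem_image, g3 m]
    rw [Finset.prod_congr rfl (fun m _ => hv m), Finset.prod_const]
    simp
  rw [hcard, Finset.sum_congr rfl (fun G _ => hfib G), Finset.sum_const, Finset.card_univ]
  simp [Nat.card_eq_fintype_card, mul_comm]

lemma cardA_zero (l r n : ℕ) (hl : 1 ≤ l) (hr : 1 ≤ r) (hrn : r ≤ n) :
    Nat.card {F : GoodT l r (n + 1) 0 // ∀ m, Fin.last n ∈ blFun (F.1 m)} = 0 := by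
  rw [Nat.card_eq_zero]
  left
  constructor
  rintro ⟨⟨F, h1, h2, h3, h4⟩, h5⟩
  set m0 : Fin l := ⟨0, hl⟩
  have hz : (⟨0, by omega⟩ : Fin (n + 1)) ∈ blFun (F m0) :=
    h2 m0 ⟨0, by omega⟩ (by show 0 < r; omega)
  have hlast := h5 m0
  have hne : (⟨0, by omega⟩ : Fin (n + 1)) ≠ Fin.last n := by
    simp only [ne_eq, Fin.ext_iff, Fin.val_last]
    omega
  have h2' : 1 < (blFun (F m0)).card :=
    Finset.one_lt_card.mpr ⟨_, hz, _, hlast, hne⟩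
  rw [h3 m0] at h2'
  omega

lemma card_split (l r n k : ℕ) :
    Nat.card (GoodT l r (n + 1) k) =
      Nat.card {F : GoodT l r (n + 1) k // ∀ m, Fin.last n ∈ blFun (F.1 m)} +
      Nat.card {F : GoodT l r (n + 1) k // ¬ ∀ m, Fin.last n ∈ blFun (F.1 m)} := by
  classical
  rw [← Nat.card_sum]
  exact Nat.card_congr (Equiv.sumCompl _).symm

lemma goodT_card_eq_zero (l r n k : ℕ) (hl : 1 ≤ l) (hk : n ≤ k) :
    Nat.card (GoodT l r n k) = 0 := by
  rw [Nat.card_eq_zero]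
  left
  constructor
  rintro ⟨F, h1, h2, h3, h4⟩
  have hle : (blFun (F ⟨0, hl⟩)).card ≤ n := by
    have := Finset.card_le_univ (blFun (F ⟨0, hl⟩))
    simpa using this
  rw [h3 ⟨0, hl⟩] at hle
  omega

lemma rec_succ (l r n k : ℕ) (hl : 1 ≤ l) (hrn : r ≤ n) :
    Nat.card (GoodT l r (n + 1) (k + 1)) =
      (n - k) ^ l * Nat.card (GoodT l r n k) +
        (k + 1 + 1) ^ l * Nat.card (GoodT l r n (k + 1)) := by
  rw [card_split, cardA_succ l r n k hrn, cardB l r n (k + 1) hl hrn]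

lemma rec_zero (l r n : ℕ) (hl : 1 ≤ l) (hr : 1 ≤ r) (hrn : r ≤ n) :
    Nat.card (GoodT l r (n + 1) 0) = 1 ^ l * Nat.card (GoodT l r n 0) := by
  rw [card_split, cardA_zero l r n hl hr hrn, cardB l r n 0 hl hrn]
  simp

lemma lrEulerCount_eq (l r n : ℕ) (k : ℤ) (hk : 0 ≤ k) :
    lrEulerCount l r n k = Nat.card (GoodT l r n k.toNat) := by
  rw [lrEulerCount, if_neg (not_lt.mpr hk)]
  rfl

end LrEulerProof

/-- **Recurrence for the (l,r)-Eulerian numbers.** For `n ≥ r + 1` and `k ≥ 0`,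
`E(n,k) = (n−k)^l·E(n−1,k−1) + (k+1)^l·E(n−1,k)`. -/
theorem lrEulerCount_recurrence (l r : ℕ) (hl : 1 ≤ l) (hr : 1 ≤ r) :
    ∀ (n : ℕ) (k : ℤ), r + 1 ≤ n → 0 ≤ k →
      (lrEulerCount l r n k : ℤ) =
        ((n : ℤ) - k) ^ l * (lrEulerCount l r (n - 1) (k - 1) : ℤ) +
          (k + 1) ^ l * (lrEulerCount l r (n - 1) k : ℤ) := by
  intro n k hn hk
  obtain ⟨n', rfl⟩ : ∃ n', n = n' + 1 := ⟨n - 1, by omega⟩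
  have hrn : r ≤ n' := by omega
  simp only [Nat.add_sub_cancel]
  obtain ⟨kk, rfl⟩ : ∃ kk : ℕ, k = (kk : ℤ) := ⟨k.toNat, (Int.toNat_of_nonneg hk).symm⟩
  open LrEulerProof in
  cases kk with
  | zero =>
    have h0 : lrEulerCount l r n' (((0 : ℕ) : ℤ) - 1) = 0 := by
      rw [lrEulerCount, if_pos (by norm_num)]
    rw [h0, lrEulerCount_eq l r (n' + 1) _ (by norm_num),
      lrEulerCount_eq l r n' _ (by norm_num)]
    simp only [Int.toNat_natCast]
    rw [rec_zero l r n' hl hr hrn]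
    push_cast
    ring
  | succ k' =>
    have hk1 : ((k' + 1 : ℕ) : ℤ) - 1 = ((k' : ℕ) : ℤ) := by push_cast; ring
    rw [hk1, lrEulerCount_eq l r (n' + 1) _ (by positivity),
      lrEulerCount_eq l r n' _ (by positivity),
      lrEulerCount_eq l r n' ((k' + 1 : ℕ) : ℤ) (by positivity)]
    simp only [Int.toNat_natCast]
    by_cases hkn : k' ≤ n'
    · rw [rec_succ l r n' k' hl hrn]
      push_cast [hkn]
      ring
    · rw [goodT_card_eq_zero l r (n' + 1) (k' + 1) hl (by omega),
        goodT_card_eq_zero l r n' k' hl (by omega),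
        goodT_card_eq_zero l r n' (k' + 1) hl (by omega)]
      push_cast
      ring
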